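/- Let X be a topological space, let L be a complete lattice, and let Φ : Opens(X) → L be an order-preserving map that preserves arbitrary infima and that preserves suprema of nonempty upwards-directed families (Φ(⨆S) = ⨆Φ(S) for every nonempty upwards-directed family S of open sets). Define Ψ : L → Opens(X) by Ψ(I) = the interior of the intersection of all open sets V with I ≤ Φ(V). Then Ψ preserves compact containment: if I, J ∈ L satisfy I ⋐ J in L, then Ψ(I) ⋐ Ψ(J) in Opens(X). -/
import Mathlib


open TopologicalSpace

/-- In a complete lattice, `a` is compactly contained in `b` if whenever `b` is below the
supremum of a family, `a` is already below the supremum of finitely many of its members. -/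
def CompactlyContained {L : Type*} [CompleteLattice L] (a b : L) : Prop :=
  ∀ S : Set L, b ≤ sSup S → ∃ F : Finset L, ↑F ⊆ S ∧ a ≤ F.sup id

/-- The dual action of a monotone continuous action preserves compact
containment.  Let `Φ : Opens X → L` be order-preserving, preserve arbitrary infima, and
preserve suprema of nonempty upwards-directed families.  Let `Ψ I = sInf {V | I ≤ Φ V}`.
Then `I ⋐ J` in `L` implies `Ψ I ⋐ Ψ J` in `Opens X`. -/
theorem dual_action_preserves_compactContainment
    {X : Type*} [TopologicalSpace X] {L : Type*} [CompleteLattice L]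
    (Φ : Opens X → L) (hmono : Monotone Φ)
    (hinf : ∀ S : Set (Opens X), Φ (sInf S) = sInf (Φ '' S))
    (hdirsup : ∀ S : Set (Opens X), S.Nonempty → DirectedOn (· ≤ ·) S →
      Φ (sSup S) = sSup (Φ '' S)) :
    ∀ I J : L, CompactlyContained I J →
      CompactlyContained (sInf {V : Opens X | I ≤ Φ V}) (sInf {V : Opens X | J ≤ Φ V}) := by
  classical
  intro I J hIJ S hS
  set T : Set (Opens X) := {U | ∃ F : Finset (Opens X), ↑F ⊆ S ∧ U = F.sup id} with hT
  have hTne : T.Nonempty := ⟨⊥, ∅, by simp⟩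
  have hTdir : DirectedOn (· ≤ ·) T := by
    rintro _ ⟨F1, h1, rfl⟩ _ ⟨F2, h2, rfl⟩
    refine ⟨(F1 ∪ F2).sup id, ⟨F1 ∪ F2, ?_, rfl⟩, ?_, ?_⟩
    · push_cast
      exact Set.union_subset h1 h2
    · exact Finset.sup_mono Finset.subset_union_left
    · exact Finset.sup_mono Finset.subset_union_right
  have hsup : sSup S ≤ sSup T := by
    apply sSup_le; intro s hs
    exact le_sSup ⟨{s}, by simpa, by simp⟩
  have hJΦ : J ≤ Φ (sInf {V : Opens X | J ≤ Φ V}) := by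
    rw [hinf]; apply le_sInf; rintro _ ⟨V, hV, rfl⟩; exact hV
  have hJsup : J ≤ sSup (Φ '' T) := by
    calc J ≤ Φ (sInf {V : Opens X | J ≤ Φ V}) := hJΦ
    _ ≤ Φ (sSup T) := hmono (hS.trans hsup)
    _ = sSup (Φ '' T) := hdirsup T hTne hTdir
  obtain ⟨F, hFsub, hFle⟩ := hIJ (Φ '' T) hJsup
  have hch : ∀ x ∈ F, ∃ G : Finset (Opens X), ↑G ⊆ S ∧ Φ (G.sup id) = x := by
    intro x hx
    obtain ⟨U, hU, rfl⟩ := hFsub hx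
    obtain ⟨G, hG, rfl⟩ := hU
    exact ⟨G, hG, rfl⟩
  choose g hg1 hg2 using hch
  refine ⟨F.attach.biUnion (fun x => g x x.2), ?_, ?_⟩
  · intro V hV
    simp only [Finset.coe_biUnion, Set.mem_iUnion, Finset.mem_coe] at hV
    obtain ⟨x, _, hVx⟩ := hV
    exact hg1 _ _ hVx
  · apply sInf_le
    show I ≤ Φ _
    refine le_trans hFle ?_
    apply Finset.sup_le
    intro x hx
    rw [id, ← hg2 x hx]
    apply hmono
    apply Finset.sup_mono
    intro V hV
    exact Finset.mem_biUnion.2 ⟨⟨x, hx⟩, Finset.mem_attach _ _, hV⟩
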